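/- Let K : X → Y be compact, ν, ρ > 0, and X_{ν,ρ} := {|K|^ν w : ‖w‖ ≤ ρ}. Then for every δ > 0, the conditional stability modulus satisfies sup{‖x‖ : x ∈ X_{ν,ρ}, ‖Kx‖ ≤ δ} ≤ δ^{ν/(ν+1)} ρ^{1/(ν+1)}. -/

import Mathlib

open scoped InnerProductSpace

private lemma orthonormal_hasSum_coeff_and_norm
    {X : Type*} [NormedAddCommGroup X] [InnerProductSpace ℝ X]
    {e : ℕ → X} (he : Orthonormal ℝ e) {c : ℕ → ℝ} {x : X}
    (h : HasSum (fun n => c n • e n) x) :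
    (∀ m, ⟪x, e m⟫_ℝ = c m) ∧ HasSum (fun n => c n ^ 2) (‖x‖ ^ 2) := by
  have hcoef : ∀ m, ⟪x, e m⟫_ℝ = c m := by
    intro m
    have h2 : HasSum (fun n => ⟪e m, c n • e n⟫_ℝ) ⟪e m, x⟫_ℝ := (innerSL ℝ (e m)).hasSum h
    have h3 : (fun n => ⟪e m, c n • e n⟫_ℝ) = fun n => if n = m then c m else 0 := by
      funext n
      rw [real_inner_smul_right]
      rcases eq_or_ne n m with rfl | hnm
      · simp [real_inner_self_eq_norm_sq, he.1 n]
      · simp [he.2 hnm.symm, hnm]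
    rw [h3] at h2
    rw [real_inner_comm]
    exact h2.unique (hasSum_ite_eq m (c m))
  refine ⟨hcoef, ?_⟩
  have h2 : HasSum (fun n => ⟪x, c n • e n⟫_ℝ) ⟪x, x⟫_ℝ := (innerSL ℝ x).hasSum h
  have h3 : (fun n => ⟪x, c n • e n⟫_ℝ) = fun n => c n ^ 2 := by
    funext n
    rw [real_inner_smul_right, hcoef n]; ring
  rw [h3, real_inner_self_eq_norm_sq] at h2
  exact h2

theorem conditional_stability_source_set
    {X Y : Type*} [NormedAddCommGroup X] [InnerProductSpace ℝ X] [CompleteSpace X]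
    [NormedAddCommGroup Y] [InnerProductSpace ℝ Y] [CompleteSpace Y]
    (K : X →L[ℝ] Y) (hK : IsCompactOperator ⇑K)
    (σ : ℕ → ℝ) (u : ℕ → Y) (v : ℕ → X)
    (hσ : ∀ n, 0 < σ n) (hu : Orthonormal ℝ u) (hv : Orthonormal ℝ v)
    (hsvd : ∀ x : X, HasSum (fun n => (σ n * ⟪x, v n⟫_ℝ) • u n) (K x))
    (ν ρ : ℝ) (hν : 0 < ν) (hρ : 0 < ρ)
    (A : X → X)
    (hA : ∀ w : X, HasSum (fun n => (σ n ^ ν * ⟪w, v n⟫_ℝ) • v n) (A w))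
    (δ : ℝ) (hδ : 0 < δ) :
    ∀ x : X, (∃ w : X, ‖w‖ ≤ ρ ∧ A w = x) → ‖K x‖ ≤ δ →
      ‖x‖ ≤ δ ^ (ν / (ν + 1)) * ρ ^ (1 / (ν + 1)) := by
  rintro x ⟨w, hw, hAw⟩ hKx
  have hν1 : (0:ℝ) < ν + 1 := by linarith
  set θ : ℝ := ν / (ν + 1) with hθ
  have hθpos : 0 < θ := by positivity
  set a : ℕ → ℝ := fun n => ⟪w, v n⟫_ℝ with ha
  set c : ℕ → ℝ := fun n => σ n ^ ν * a n with hc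
  have h1 : HasSum (fun n => c n • v n) x := hAw ▸ hA w
  obtain ⟨hcoef, hxsum⟩ := orthonormal_hasSum_coeff_and_norm hv h1
  have h2 : HasSum (fun n => (σ n * c n) • u n) (K x) := by
    have := hsvd x
    simpa only [hcoef] using this
  obtain ⟨-, hKsum⟩ := orthonormal_hasSum_coeff_and_norm hu h2
  have hBsummable : Summable (fun n => a n ^ 2) := by
    have := hv.inner_products_summable w
    simpa only [Real.norm_eq_abs, sq_abs, real_inner_comm] using this
  have hBessel : ∑' n, a n ^ 2 ≤ ‖w‖ ^ 2 := by
    have := hv.tsum_inner_products_le w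
    simpa only [Real.norm_eq_abs, sq_abs, real_inner_comm] using this
  set s : ℕ → ℝ := fun n => (σ n * c n) ^ 2 with hs
  set t : ℕ → ℝ := fun n => a n ^ 2 with ht
  have hsnn : ∀ n, 0 ≤ s n := fun n => sq_nonneg _
  have htnn : ∀ n, 0 ≤ t n := fun n => sq_nonneg _
  have hpq : ((ν+1)/ν).HolderConjugate (ν+1) := by
    constructor
    · rw [inv_div, inv_one]; field_simp
    · positivity
    · positivity
  have hfp : ∀ n, (s n ^ θ) ^ ((ν+1)/ν) = s n := by
    intro n
    rw [← Real.rpow_mul (hsnn n), show θ * ((ν+1)/ν) = 1 by rw [hθ]; field_simp,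
      Real.rpow_one]
  have hgq : ∀ n, (t n ^ (1/(ν+1))) ^ (ν+1) = t n := by
    intro n
    rw [← Real.rpow_mul (htnn n), show (1/(ν+1)) * (ν+1) = 1 by field_simp, Real.rpow_one]
  have key : ∀ n, c n ^ 2 = s n ^ θ * t n ^ (1/(ν+1)) := by
    intro n
    rcases eq_or_ne (a n) 0 with h0 | h0
    · have hc0 : c n = 0 := by rw [hc]; simp [h0]
      have hs0 : s n = 0 := by rw [hs]; simp [hc0]
      have ht0 : t n = 0 := by rw [ht]; simp [h0]
      rw [hc0, hs0, ht0, Real.zero_rpow hθpos.ne', zero_mul]; ring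
    · have hσn := hσ n
      have hb : (0:ℝ) < a n ^ 2 := by positivity
      have hσc : σ n * c n = σ n ^ (ν + 1) * a n := by
        rw [hc, Real.rpow_add_one hσn.ne']; ring
      have hsn : s n = σ n ^ ((ν+1)*2) * a n ^ 2 := by
        show (σ n * c n) ^ 2 = _
        rw [hσc, mul_pow, ← Real.rpow_natCast (σ n ^ (ν+1)) 2,
          ← Real.rpow_mul hσn.le]
        norm_num
      have hlhs : c n ^ 2 = σ n ^ (ν*2) * a n ^ 2 := by
        show (σ n ^ ν * a n) ^ 2 = _
        rw [mul_pow, ← Real.rpow_natCast (σ n ^ ν) 2, ← Real.rpow_mul hσn.le]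
        norm_num
      have htn : t n = a n ^ 2 := rfl
      rw [hsn, hlhs, htn, Real.mul_rpow (by positivity) hb.le, ← Real.rpow_mul hσn.le,
        mul_assoc, ← Real.rpow_add hb,
        show (ν+1)*2*θ = ν*2 by rw [hθ]; field_simp,
        show θ + 1/(ν+1) = 1 by rw [hθ]; field_simp, Real.rpow_one]
  have hsum_s : Summable (fun n => (s n ^ θ) ^ ((ν+1)/ν)) := by
    simpa only [hfp] using hKsum.summable
  have hsum_t : Summable (fun n => (t n ^ (1/(ν+1))) ^ (ν+1)) := by
    simpa only [hgq] using hBsummable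
  have H := Real.inner_le_Lp_mul_Lq_tsum_of_nonneg hpq
    (fun n => Real.rpow_nonneg (hsnn n) θ)
    (fun n => Real.rpow_nonneg (htnn n) _) hsum_s hsum_t
  simp only [hfp, hgq] at H
  have hLHS : ∑' n, s n ^ θ * t n ^ (1/(ν+1)) = ‖x‖ ^ 2 := by
    rw [← hxsum.tsum_eq]
    exact tsum_congr fun n => (key n).symm
  have h1div : 1/((ν+1)/ν) = θ := by rw [hθ, one_div_div]
  rw [hLHS, h1div, hKsum.tsum_eq] at H
  have hb1 : (‖K x‖ ^ 2) ^ θ ≤ (δ ^ (2:ℕ)) ^ θ :=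
    Real.rpow_le_rpow (by positivity) (by nlinarith [norm_nonneg (K x)]) hθpos.le
  have hb2 : (∑' n, t n) ^ (1/(ν+1)) ≤ (ρ ^ (2:ℕ)) ^ (1/(ν+1)) := by
    refine Real.rpow_le_rpow (tsum_nonneg htnn) ?_ (by positivity)
    nlinarith [norm_nonneg w]
  have hfinal : ‖x‖ ^ 2 ≤ (δ ^ θ * ρ ^ (1/(ν+1))) ^ 2 := by
    have e1 : (δ ^ (2:ℕ)) ^ θ = (δ ^ θ) ^ (2:ℕ) := by
      rw [← Real.rpow_natCast δ 2, ← Real.rpow_mul hδ.le, mul_comm,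
        Real.rpow_mul hδ.le, Real.rpow_natCast]
    have e2 : (ρ ^ (2:ℕ)) ^ (1/(ν+1)) = (ρ ^ (1/(ν+1))) ^ (2:ℕ) := by
      rw [← Real.rpow_natCast ρ 2, ← Real.rpow_mul hρ.le, mul_comm,
        Real.rpow_mul hρ.le, Real.rpow_natCast]
    calc ‖x‖ ^ 2 ≤ (‖K x‖ ^ 2) ^ θ * (∑' n, t n) ^ (1/(ν+1)) := H
      _ ≤ (δ ^ (2:ℕ)) ^ θ * (ρ ^ (2:ℕ)) ^ (1/(ν+1)) := by
          refine mul_le_mul hb1 hb2 (Real.rpow_nonneg (tsum_nonneg htnn) _) (by positivity)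
      _ = (δ ^ θ * ρ ^ (1/(ν+1))) ^ 2 := by rw [e1, e2, mul_pow]
  have hM : 0 ≤ δ ^ θ * ρ ^ (1/(ν+1)) := by positivity
  calc ‖x‖ = Real.sqrt (‖x‖ ^ 2) := (Real.sqrt_sq (norm_nonneg x)).symm
    _ ≤ Real.sqrt ((δ ^ θ * ρ ^ (1/(ν+1))) ^ 2) := Real.sqrt_le_sqrt hfinal
    _ = δ ^ θ * ρ ^ (1/(ν+1)) := Real.sqrt_sq hM
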